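/- Let A be a commutative ring and I a finitely generated ideal of A. Then the canonical ring homomorphism A[[X]] ⊗_A (A/I) → (A/I)[[X]] is an isomorphism; equivalently, A[[X]]/(I·A[[X]]) ≅ (A/I)[[X]]. -/

import Mathlib

/-- The canonical `A`-algebra homomorphism `A[[X]] → (A/I)[[X]]` induced by reduction of
coefficients. -/
noncomputable def powerSeriesQuotMap (A : Type*) [CommRing A] (I : Ideal A) :
    PowerSeries A →ₐ[A] PowerSeries (A ⧸ I) where
  toRingHom := PowerSeries.map (Ideal.Quotient.mk I)
  commutes' := fun a => by
    simp [PowerSeries.algebraMap_apply]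

/-- Every element of `B ⊗[A] (A ⧸ I)` is a pure tensor `b ⊗ 1`. -/
lemma exists_tmul_one_eq (A : Type*) [CommRing A] (I : Ideal A) (B : Type*) [CommRing B]
    [Algebra A B] (t : TensorProduct A B (A ⧸ I)) :
    ∃ b : B, b ⊗ₜ[A] (1 : A ⧸ I) = t := by
  induction t using TensorProduct.induction_on with
  | zero => exact ⟨0, by simp⟩
  | tmul b q =>
    obtain ⟨a, rfl⟩ := Ideal.Quotient.mk_surjective q
    refine ⟨a • b, ?_⟩
    rw [TensorProduct.smul_tmul]
    congr 1
    simp [Algebra.smul_def]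
  | add x y hx hy =>
    obtain ⟨b₁, rfl⟩ := hx
    obtain ⟨b₂, rfl⟩ := hy
    exact ⟨b₁ + b₂, by rw [TensorProduct.add_tmul]⟩

/-- Let `A` be a commutative ring and `I` a finitely generated ideal.  Then the canonical
ring homomorphism `A[[X]] ⊗_A (A/I) → (A/I)[[X]]` is an isomorphism; equivalently,
`A[[X]]/(I·A[[X]]) ≅ (A/I)[[X]]`. -/
theorem powerSeries_tensor_quotient_bijective (A : Type*) [CommRing A] (I : Ideal A)
    (hI : I.FG) :
    Function.Bijective
      (Algebra.TensorProduct.lift (powerSeriesQuotMap A I)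
        (IsScalarTower.toAlgHom A (A ⧸ I) (PowerSeries (A ⧸ I)))
        (fun x y => Commute.all _ _)) := by
  set φ := Algebra.TensorProduct.lift (powerSeriesQuotMap A I)
      (IsScalarTower.toAlgHom A (A ⧸ I) (PowerSeries (A ⧸ I)))
      (fun x y => Commute.all _ _) with hφ
  have key : ∀ f : PowerSeries A, φ (f ⊗ₜ[A] 1) = PowerSeries.map (Ideal.Quotient.mk I) f := by
    intro f
    rw [hφ, Algebra.TensorProduct.lift_tmul]
    simp [powerSeriesQuotMap]
  obtain ⟨S, hS⟩ := hI
  constructor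
  · rw [injective_iff_map_eq_zero]
    intro t ht
    obtain ⟨f, rfl⟩ := exists_tmul_one_eq A I (PowerSeries A) t
    rw [key] at ht
    -- each coefficient of f lies in I = span S
    have hcoeff : ∀ n : ℕ, PowerSeries.coeff (R := A) n f ∈ Submodule.span A (↑S : Set A) := by
      intro n
      have : Ideal.Quotient.mk I (PowerSeries.coeff (R := A) n f) = 0 := by
        have := congrArg (PowerSeries.coeff (R := A ⧸ I) n) ht
        simpa using this
      rw [Ideal.submodule_span_eq, hS]
      exact (Ideal.Quotient.eq_zero_iff_mem).mp this
    choose c hc using fun n => (Submodule.mem_span_finset.mp (hcoeff n)).imp fun _ h => h.2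
    have hf : f = ∑ a ∈ S, PowerSeries.C (R := A) a * PowerSeries.mk (fun n => c n a) := by
      ext n
      rw [map_sum]
      simp only [PowerSeries.coeff_C_mul, PowerSeries.coeff_mk]
      rw [← hc n]
      exact Finset.sum_congr rfl fun a _ => (smul_eq_mul (α := A) _ _).symm ▸ (mul_comm _ _)
    rw [hf, TensorProduct.sum_tmul]
    refine Finset.sum_eq_zero fun a ha => ?_
    have haI : a ∈ I := hS ▸ Ideal.subset_span ha
    have : PowerSeries.C (R := A) a * PowerSeries.mk (fun n => c n a)
        = a • PowerSeries.mk (fun n => c n a) := by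
      rw [PowerSeries.smul_eq_C_mul]
    rw [this, TensorProduct.smul_tmul]
    have : a • (1 : A ⧸ I) = 0 := by
      rw [Algebra.smul_def, mul_one]
      simpa [Ideal.Quotient.algebraMap_eq] using Ideal.Quotient.eq_zero_iff_mem.mpr haI
    rw [this, TensorProduct.tmul_zero]
  · intro g
    refine ⟨(PowerSeries.mk fun n =>
        (Ideal.Quotient.mk_surjective (PowerSeries.coeff (R := A ⧸ I) n g)).choose) ⊗ₜ[A] 1, ?_⟩
    rw [key]
    ext n
    simpa using (Ideal.Quotient.mk_surjective (PowerSeries.coeff (R := A ⧸ I) n g)).choose_spec
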